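/- Suppose κ ≥ ℵ₂ is regular, S ⊆ E^κ_{>ω} is stationary, and ⟨C_δ : δ ∈ S⟩ is a C-sequence witnessing CG(S, κ, ½, ⟨J_δ⟩): for every club D ⊆ κ there is δ ∈ S such that {β < δ : (β, min(C_δ \ (β+1))] ∩ D ≠ ∅} ∈ J_δ⁺. Then there exists a club D ⊆ κ such that ⟨Φ_D(C_δ) : δ ∈ S⟩ witnesses CG(S, κ, 1, ⟨J_δ⟩): for every club E ⊆ κ there is δ ∈ S such that {β < δ : min(Φ_D(C_δ) \ (β+1)) ∈ E} ∈ J_δ⁺. -/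

import Mathlib

open Set Ordinal

noncomputable section

abbrev O : Type 1 := Ordinal.{0}

/-- `ssup A` is the strict supremum of a set of ordinals. -/
def ssup (A : Set O) : O := sSup ((· + 1) '' A)

/-- `acc⁺(A)`: accumulation points below the strict sup. -/
def accP (A : Set O) : Set O := {α | α < ssup A ∧ 0 < α ∧ sSup (A ∩ Iio α) = α}

def accOf (A : Set O) : Set O := A ∩ accP A

def nacc (A : Set O) : Set O := A \ accOf A

def clOf (A : Set O) : Set O := A ∪ accP A

/-- order type of a set of ordinals -/
def otp (A : Set O) : Ordinal.{1} := Ordinal.type (Subrel ((· < ·) : O → O → Prop) (· ∈ A))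

/-- lift a small ordinal one universe up -/
def olift (a : O) : Ordinal.{1} := Ordinal.lift.{1} a

/-- `suc_σ(A)`: elements of `A` whose index in `A` is `j+1` for some `j < σ`. -/
def sucSet (σ : Ordinal.{1}) (A : Set O) : Set O := {β | β ∈ A ∧ ∃ j < σ, otp (A ∩ Iio β) = j + 1}

def UnbIn (A : Set O) (δ : O) : Prop := ∀ α < δ, ∃ β ∈ A, α < β ∧ β < δ

def IsClubIn (C : Set O) (δ : O) : Prop :=
  C ⊆ Iio δ ∧ UnbIn C δ ∧ ∀ α < δ, 0 < α → sSup (C ∩ Iio α) = α → α ∈ C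

def IsStatIn (S : Set O) (δ : O) : Prop :=
  S ⊆ Iio δ ∧ ∀ D, IsClubIn D δ → (S ∩ D).Nonempty

def Ecof (κ : O) (lam : Cardinal.{0}) : Set O := {δ | δ < κ ∧ δ.cof = lam}

def PhiSup (B x : Set O) : Set O :=
  if sSup (x ∩ B) = sSup x then clOf (x ∩ B) else x \ Iio (sSup (x ∩ B))

def PhiD (D x : Set O) : Set O :=
  if sSup (D ∩ Iio (sSup x)) = sSup x then
    {γ | ∃ η ∈ x, sInf D < η ∧ γ = sSup (D ∩ Iio η)}
  else x \ Iio (sSup (D ∩ Iio (sSup x)))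

/-- `cf(δ)`-additive proper ideal on `δ` extending the bounded ideal. -/
def GoodIdeal (δ : O) (J : Set (Set O)) : Prop :=
  (∀ A B : Set O, A ⊆ B → B ∈ J → A ∈ J) ∧
  (Iio δ ∉ J) ∧
  (∀ B : Set O, B ⊆ Iio δ → sSup B < δ → B ∈ J) ∧
  (∀ ξ < (Ordinal.cof δ).ord, ∀ f : O → Set O, (∀ i < ξ, f i ∈ J) → (⋃ i ∈ Iio ξ, f i) ∈ J)

namespace Statement17Aux

lemma bdd_of_subset_Iio {X : Set O} {b : O} (h : X ⊆ Iio b) : BddAbove X :=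
  ⟨b, fun _ hx => (h hx).le⟩

lemma sSup_le_of_subset_Iio {X : Set O} {b : O} (h : X ⊆ Iio b) : sSup X ≤ b :=
  csSup_le' fun _ hx => (h hx).le

lemma nonempty_of_sSup_pos {X : Set O} (h : 0 < sSup X) : X.Nonempty := by
  rcases X.eq_empty_or_nonempty with rfl | h'
  · rw [csSup_empty, ← Ordinal.bot_eq_zero] at h
    exact absurd h (lt_irrefl _)
  · exact h'

lemma sSup_inter_squeeze {X Y : Set O} {α : O} (hXY : X ⊆ Y) (h0 : 0 < α)
    (h : sSup (X ∩ Iio α) = α) : sSup (Y ∩ Iio α) = α := by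
  refine le_antisymm (sSup_le_of_subset_Iio inter_subset_right) ?_
  calc α = sSup (X ∩ Iio α) := h.symm
    _ ≤ sSup (Y ∩ Iio α) := csSup_le_csSup (bdd_of_subset_Iio inter_subset_right)
        (nonempty_of_sSup_pos (by rw [h]; exact h0)) (inter_subset_inter_left _ hXY)

/-- A common limit point of countably many clubs in `θ`, above `α`. -/
lemma exists_common_limit {θ : O} (hθ : Cardinal.aleph0 < θ.cof) (D : ℕ → Set O)
    (hD : ∀ n, IsClubIn (D n) θ) {α : O} (hα : α < θ) :
    ∃ s, α < s ∧ s < θ ∧ ∀ n, sSup (D n ∩ Iio s) = s := by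
  have hg : ∀ n : ℕ, ∀ x : O, x < θ → ∃ y, y ∈ D n ∧ x < y ∧ y < θ := by
    intro n x hx
    obtain ⟨y, hy, h1, h2⟩ := (hD n).2.1 x hx
    exact ⟨y, hy, h1, h2⟩
  choose g hg1 hg2 hg3 using hg
  let h : ℕ → {x : O // x < θ} := fun k =>
    Nat.rec ⟨α, hα⟩ (fun k' p => ⟨g k'.unpair.1 p.1 p.2, hg3 _ _ _⟩) k
  have hstep : ∀ k : ℕ, (h k).1 < (h (k + 1)).1 := fun k => hg2 _ _ _
  have hmem : ∀ k : ℕ, (h (k + 1)).1 ∈ D k.unpair.1 := fun k => hg1 _ _ _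
  have hmono : StrictMono (fun k => (h k).1) := strictMono_nat_of_lt_succ hstep
  set s : O := ⨆ k, (h k).1 with hs
  have hle : ∀ k, (h k).1 ≤ s := Ordinal.le_iSup _
  have hsθ : s < θ := Ordinal.iSup_lt_ord (by rw [Cardinal.mk_nat]; exact hθ) fun k => (h k).2
  have hαs : α < s := lt_of_lt_of_le (hstep 0) (hle 1)
  refine ⟨s, hαs, hsθ, fun n => ?_⟩
  refine le_antisymm (sSup_le_of_subset_Iio inter_subset_right) ?_
  rw [hs]
  refine Ordinal.iSup_le fun k => ?_
  have hk : k ≤ Nat.pair n k := Nat.right_le_pair n k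
  have h1 : (h k).1 ≤ (h (Nat.pair n k)).1 := hmono.monotone hk
  have h2 : (h (Nat.pair n k)).1 < (h (Nat.pair n k + 1)).1 := hstep _
  have h3 : (h (Nat.pair n k + 1)).1 ∈ D n := by
    have := hmem (Nat.pair n k); rwa [Nat.unpair_pair] at this
  have h4 : (h (Nat.pair n k + 1)).1 < s :=
    lt_of_lt_of_le (hstep (Nat.pair n k + 1)) (hle (Nat.pair n k + 2))
  exact le_trans (le_trans h1 h2.le)
    (le_csSup (bdd_of_subset_Iio inter_subset_right) ⟨h3, h4⟩)

lemma club_Iio {θ : O} (hθ : Order.IsSuccLimit θ) : IsClubIn (Iio θ) θ := by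
  refine ⟨fun x hx => hx, fun α hα => ⟨α + 1, ?_, lt_add_one α, ?_⟩, fun α hα _ _ => hα⟩
  · rw [mem_Iio, Ordinal.add_one_eq_succ]; exact hθ.succ_lt hα
  · rw [Ordinal.add_one_eq_succ]; exact hθ.succ_lt hα

lemma inter_club {θ : O} (hθ : Cardinal.aleph0 < θ.cof) {D E : Set O}
    (hD : IsClubIn D θ) (hE : IsClubIn E θ) : IsClubIn (D ∩ E) θ := by
  refine ⟨fun x hx => hD.1 hx.1, ?_, ?_⟩
  · intro α hα
    obtain ⟨s, h1, h2, h3⟩ := exists_common_limit hθ (fun n => if n = 0 then D else E)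
      (fun n => by split <;> assumption) hα
    have hs0 : 0 < s := lt_of_le_of_lt (zero_le) h1
    have hsD : s ∈ D := hD.2.2 s h2 hs0 (by simpa using h3 0)
    have hsE : s ∈ E := hE.2.2 s h2 hs0 (by simpa using h3 1)
    exact ⟨s, ⟨hsD, hsE⟩, h1, h2⟩
  · intro α hα h0 hsup
    exact ⟨hD.2.2 α hα h0 (sSup_inter_squeeze inter_subset_left h0 hsup),
      hE.2.2 α hα h0 (sSup_inter_squeeze inter_subset_right h0 hsup)⟩

def deriv (θ : O) (A : Set O) : Set O := {α | α < θ ∧ 0 < α ∧ sSup (A ∩ Iio α) = α}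

lemma deriv_subset {θ : O} {A : Set O} (hA : IsClubIn A θ) : deriv θ A ⊆ A :=
  fun α h => hA.2.2 α h.1 h.2.1 h.2.2

lemma deriv_club {θ : O} (hθ : Cardinal.aleph0 < θ.cof) {A : Set O}
    (hA : IsClubIn A θ) : IsClubIn (deriv θ A) θ := by
  refine ⟨fun α h => h.1, ?_, ?_⟩
  · intro α hα
    obtain ⟨s, h1, h2, h3⟩ := exists_common_limit hθ (fun _ => A) (fun _ => hA) hα
    exact ⟨s, ⟨h2, lt_of_le_of_lt (zero_le) h1, h3 0⟩, h1, h2⟩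
  · intro α hα h0 hsup
    refine ⟨hα, h0, le_antisymm (sSup_le_of_subset_Iio inter_subset_right) (le_of_forall_lt ?_)⟩
    intro t ht
    have ht' : t < sSup (deriv θ A ∩ Iio α) := by rw [hsup]; exact ht
    obtain ⟨u, hu, htu⟩ := exists_lt_of_lt_csSup
      (nonempty_of_sSup_pos (by rw [hsup]; exact h0)) ht'
    have h5 : t < sSup (A ∩ Iio u) := by rw [hu.1.2.2]; exact htu
    obtain ⟨v, hv, htv⟩ := exists_lt_of_lt_csSup (nonempty_of_sSup_pos
      (by rw [hu.1.2.2]; exact hu.1.2.1)) h5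
    have hvα : v ∈ Iio α := Set.mem_Iio.mpr (lt_trans (Set.mem_Iio.mp hv.2) (Set.mem_Iio.mp hu.2))
    exact lt_of_lt_of_le htv (le_csSup (bdd_of_subset_Iio inter_subset_right)
      ⟨hv.1, hvα⟩)

lemma iInter_club {θ : O} (hθ : Cardinal.aleph0 < θ.cof) {D : ℕ → Set O}
    (hD : ∀ n, IsClubIn (D n) θ) : IsClubIn (⋂ n, D n) θ := by
  refine ⟨fun α h => (hD 0).1 (mem_iInter.mp h 0), ?_, ?_⟩
  · intro α hα
    obtain ⟨s, h1, h2, h3⟩ := exists_common_limit hθ D hD hα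
    have hs0 : 0 < s := lt_of_le_of_lt (zero_le) h1
    exact ⟨s, mem_iInter.mpr fun n => (hD n).2.2 s h2 hs0 (h3 n), h1, h2⟩
  · intro α hα h0 hsup
    exact mem_iInter.mpr fun n => (hD n).2.2 α hα h0
      (sSup_inter_squeeze (iInter_subset D n) h0 hsup)

/-- iterated derived clubs -/
def DSeq (θ : O) (h0 : IsClubIn (Iio θ) θ)
    (F : (A : Set O) → IsClubIn A θ → {B : Set O // IsClubIn B θ}) :
    ℕ → {A : Set O // IsClubIn A θ}
  | 0 => ⟨Iio θ, h0⟩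
  | n + 1 => F (DSeq θ h0 F n).1 (DSeq θ h0 F n).2

end Statement17Aux

/-- upgrading `σ = ½` to `σ = 1` via `Φ_D`. -/
theorem statement17 (κ : Cardinal.{0}) (hκ : κ.IsRegular) (hκ2 : Cardinal.aleph 2 ≤ κ)
    (S : Set O) (hSsub : S ⊆ {δ : O | δ < κ.ord ∧ Cardinal.aleph0 < δ.cof})
    (hS : IsStatIn S κ.ord)
    (J : O → Set (Set O)) (hJ : ∀ δ ∈ S, GoodIdeal δ (J δ))
    (C : O → Set O) (hC : ∀ δ ∈ S, IsClubIn (C δ) δ)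
    (hguess : ∀ D, IsClubIn D κ.ord → ∃ δ ∈ S,
      {β | β < δ ∧ (Ioc β (sInf (C δ ∩ Ioi β)) ∩ D).Nonempty} ∉ J δ) :
    ∃ D, IsClubIn D κ.ord ∧
      ∀ E, IsClubIn E κ.ord → ∃ δ ∈ S,
        {β | β < δ ∧ sInf (PhiD D (C δ) ∩ Ioi β) ∈ E} ∉ J δ := by
  classical
  by_contra hcon
  push_neg at hcon
  choose E hE1 hE2 using hcon
  have hℵ0κ : Cardinal.aleph0 < κ := by
    refine lt_of_lt_of_le ?_ hκ2
    rw [← Cardinal.aleph_zero]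
    exact Cardinal.aleph_lt_aleph.mpr (by norm_num)
  have hθ : Cardinal.aleph0 < (κ.ord).cof := by rw [hκ.cof_eq]; exact hℵ0κ
  have hθlim : Order.IsSuccLimit (κ.ord) := Cardinal.isSuccLimit_ord hℵ0κ.le
  obtain ⟨Ds, hDsucc⟩ : ∃ Ds : ℕ → {A : Set O // IsClubIn A κ.ord}, ∀ n : ℕ,
      (Ds (n+1)).1 = Statement17Aux.deriv κ.ord ((Ds n).1 ∩ E (Ds n).1 (Ds n).2) :=
    ⟨fun n => Nat.rec ⟨Iio κ.ord, Statement17Aux.club_Iio hθlim⟩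
      (fun _ p => ⟨Statement17Aux.deriv κ.ord (p.1 ∩ E p.1 p.2),
        Statement17Aux.deriv_club hθ (Statement17Aux.inter_club hθ p.2 (hE1 p.1 p.2))⟩) n,
      fun _ => rfl⟩
  have hsub : ∀ n, (Ds (n+1)).1 ⊆ (Ds n).1 ∩ E (Ds n).1 (Ds n).2 := by
    intro n
    rw [hDsucc n]
    exact Statement17Aux.deriv_subset (Statement17Aux.inter_club hθ (Ds n).2 (hE1 _ _))
  have hlimpt : ∀ n : ℕ, ∀ γ ∈ (Ds (n+1)).1, 0 < γ ∧ sSup ((Ds n).1 ∩ Iio γ) = γ := by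
    intro n γ hγ
    rw [hDsucc n] at hγ
    exact ⟨hγ.2.1, Statement17Aux.sSup_inter_squeeze inter_subset_left hγ.2.1 hγ.2.2⟩
  set Dω : Set O := ⋂ n, (Ds n).1 with hDωdef
  have hDωclub : IsClubIn Dω κ.ord := Statement17Aux.iInter_club hθ fun n => (Ds n).2
  obtain ⟨δ, hδS, hB⟩ := hguess Dω hDωclub
  set B := {β | β < δ ∧ (Ioc β (sInf (C δ ∩ Ioi β)) ∩ Dω).Nonempty} with hBdef
  obtain ⟨hδκ, hδcof⟩ := hSsub hδS
  have hJδ := hJ δ hδS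
  have hCδ := hC δ hδS
  have hδlim : Order.IsSuccLimit δ := Ordinal.aleph0_le_cof.mp hδcof.le
  have hδ0 : 0 < δ := hδlim.pos
  have hCbdd : BddAbove (C δ) := Statement17Aux.bdd_of_subset_Iio hCδ.1
  have hCsup : sSup (C δ) = δ := by
    refine le_antisymm (Statement17Aux.sSup_le_of_subset_Iio hCδ.1)
      (le_of_forall_lt fun t ht => ?_)
    obtain ⟨b, hb, h1, _⟩ := hCδ.2.1 t ht
    exact lt_of_lt_of_le h1 (le_csSup hCbdd hb)
  have hBsub : B ⊆ Iio δ := fun β hβ => hβ.1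
  have hBsup : sSup B = δ := by
    refine le_antisymm (Statement17Aux.sSup_le_of_subset_Iio hBsub) ?_
    by_contra h
    exact hB (hJδ.2.2.1 B hBsub (lt_of_not_ge h))
  have hηfact : ∀ β < δ, sInf (C δ ∩ Ioi β) ∈ C δ ∧ β < sInf (C δ ∩ Ioi β) ∧
      sInf (C δ ∩ Ioi β) < δ := by
    intro β hβ
    obtain ⟨b, hb, h1, _⟩ := hCδ.2.1 β hβ
    have hmem := csInf_mem (⟨b, hb, h1⟩ : (C δ ∩ Ioi β).Nonempty)
    exact ⟨hmem.1, hmem.2, hCδ.1 hmem.1⟩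
  have hDsδ : ∀ (n : ℕ), ∀ t < δ, ∃ u ∈ (Ds n).1, t < u ∧ u < δ := by
    intro n t ht
    obtain ⟨β, hβB, htβ⟩ := exists_lt_of_lt_csSup
      (Statement17Aux.nonempty_of_sSup_pos (hBsup ▸ hδ0)) (hBsup ▸ ht)
    obtain ⟨γ, ⟨hγ1, hγ2⟩, hγω⟩ := hβB.2
    exact ⟨γ, mem_iInter.mp hγω n, lt_trans htβ hγ1,
      lt_of_le_of_lt hγ2 (hηfact β hβB.1).2.2⟩
  have hDssup : ∀ n : ℕ, sSup ((Ds n).1 ∩ Iio δ) = δ := by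
    intro n
    refine le_antisymm (Statement17Aux.sSup_le_of_subset_Iio inter_subset_right)
      (le_of_forall_lt fun t ht => ?_)
    obtain ⟨u, hu, h1, h2⟩ := hDsδ n t ht
    exact lt_of_lt_of_le h1
      (le_csSup (Statement17Aux.bdd_of_subset_Iio inter_subset_right) ⟨hu, h2⟩)
  have hPhi : ∀ n : ℕ, PhiD (Ds n).1 (C δ) =
      {γ | ∃ η ∈ C δ, sInf (Ds n).1 < η ∧ γ = sSup ((Ds n).1 ∩ Iio η)} := by
    intro n
    simp only [PhiD, hCsup]
    rw [if_pos (hDssup n)]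
  have hkey : ∀ β ∈ B, ∀ n : ℕ,
      sInf (PhiD (Ds n).1 (C δ) ∩ Ioi β) = sSup ((Ds n).1 ∩ Iio (sInf (C δ ∩ Ioi β))) := by
    intro β hβ n
    have hβδ : β < δ := hβ.1
    obtain ⟨γ, ⟨hβγ, hγη⟩, hγω⟩ := hβ.2
    set η := sInf (C δ ∩ Ioi β) with hηdef
    obtain ⟨hηC, hβη, hηδ⟩ := hηfact β hβδ
    have hγlim := hlimpt n γ (mem_iInter.mp hγω (n+1))
    have hne_γ : ((Ds n).1 ∩ Iio γ).Nonempty :=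
      Statement17Aux.nonempty_of_sSup_pos (by rw [hγlim.2]; exact hγlim.1)
    have hbddη : BddAbove ((Ds n).1 ∩ Iio η) :=
      Statement17Aux.bdd_of_subset_Iio inter_subset_right
    have hγs : γ ≤ sSup ((Ds n).1 ∩ Iio η) := by
      calc γ = sSup ((Ds n).1 ∩ Iio γ) := hγlim.2.symm
        _ ≤ sSup ((Ds n).1 ∩ Iio η) := csSup_le_csSup hbddη hne_γ
            (inter_subset_inter_right _ (Iio_subset_Iio hγη))
    have hβs : β < sSup ((Ds n).1 ∩ Iio η) := lt_of_lt_of_le hβγ hγs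
    have hne_η : ((Ds n).1 ∩ Iio η).Nonempty := by
      obtain ⟨d, hd⟩ := hne_γ
      exact ⟨d, hd.1, lt_of_lt_of_le hd.2 hγη⟩
    have hInfDn : sInf (Ds n).1 < η := by
      obtain ⟨d, hd⟩ := hne_η
      exact lt_of_le_of_lt (csInf_le (OrderBot.bddBelow _) hd.1) hd.2
    have hsmem : sSup ((Ds n).1 ∩ Iio η) ∈ PhiD (Ds n).1 (C δ) ∩ Ioi β := by
      rw [hPhi n]
      exact ⟨⟨η, hηC, hInfDn, rfl⟩, hβs⟩
    refine le_antisymm (csInf_le (OrderBot.bddBelow _) hsmem)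
      (le_csInf ⟨_, hsmem⟩ ?_)
    rintro y ⟨hy1, hy2⟩
    rw [hPhi n] at hy1
    obtain ⟨η', hη'C, -, rfl⟩ := hy1
    have hβη' : β < η' := by
      by_contra hle
      exact absurd hy2 (not_lt.mpr
        (le_trans (Statement17Aux.sSup_le_of_subset_Iio inter_subset_right) (not_lt.mp hle)))
    have hηη' : η ≤ η' := csInf_le (OrderBot.bddBelow _) ⟨hη'C, hβη'⟩
    exact csSup_le_csSup (Statement17Aux.bdd_of_subset_Iio inter_subset_right) hne_η
      (inter_subset_inter_right _ (Iio_subset_Iio hηη'))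
  have hmain : ∀ β ∈ B, ∃ n : ℕ, β < δ ∧
      sInf (PhiD (Ds n).1 (C δ) ∩ Ioi β) ∈ E (Ds n).1 (Ds n).2 := by
    intro β hβ
    have hβδ : β < δ := hβ.1
    obtain ⟨γ, ⟨hβγ, hγη⟩, hγω⟩ := hβ.2
    set η := sInf (C δ ∩ Ioi β) with hηdef
    obtain ⟨hηC, hβη, hηδ⟩ := hηfact β hβδ
    set sfun : ℕ → O := fun n => sSup ((Ds n).1 ∩ Iio η) with hsfundef
    have hγle : ∀ n : ℕ, γ ≤ sfun n ∧ ((Ds n).1 ∩ Iio η).Nonempty := by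
      intro n
      have hγlim := hlimpt n γ (mem_iInter.mp hγω (n+1))
      have hne_γ : ((Ds n).1 ∩ Iio γ).Nonempty :=
        Statement17Aux.nonempty_of_sSup_pos (by rw [hγlim.2]; exact hγlim.1)
      have hsub' : (Ds n).1 ∩ Iio γ ⊆ (Ds n).1 ∩ Iio η :=
        inter_subset_inter_right _ (Iio_subset_Iio hγη)
      constructor
      · calc γ = sSup ((Ds n).1 ∩ Iio γ) := hγlim.2.symm
          _ ≤ sfun n := csSup_le_csSup
              (Statement17Aux.bdd_of_subset_Iio inter_subset_right) hne_γ hsub'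
      · exact hne_γ.mono hsub'
    have hγ0 : 0 < γ := lt_of_le_of_lt (zero_le) hβγ
    have hanti : ∀ n : ℕ, sfun (n+1) ≤ sfun n := by
      intro n
      exact csSup_le_csSup (Statement17Aux.bdd_of_subset_Iio inter_subset_right)
        (hγle (n+1)).2 (inter_subset_inter_left _ (fun x hx => (hsub n hx).1))
    obtain ⟨n₀, hn₀⟩ := csInf_mem (⟨sfun 0, mem_range_self 0⟩ : (Set.range sfun).Nonempty)
    have heq : sfun (n₀+1) = sfun n₀ := by
      refine le_antisymm (hanti n₀) ?_
      calc sfun n₀ = sInf (Set.range sfun) := hn₀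
        _ ≤ sfun (n₀+1) := csInf_le (OrderBot.bddBelow _) (mem_range_self _)
    have ht0 : 0 < sfun (n₀+1) := lt_of_lt_of_le hγ0 (hγle (n₀+1)).1
    have htη : sfun (n₀+1) ≤ η := Statement17Aux.sSup_le_of_subset_Iio inter_subset_right
    have htκ : sfun (n₀+1) < κ.ord := lt_trans (lt_of_le_of_lt htη hηδ) hδκ
    have htmem : sfun (n₀+1) ∈ (Ds (n₀+1)).1 := by
      by_cases hcase : sfun (n₀+1) ∈ (Ds (n₀+1)).1
      · exact hcase
      · refine (Ds (n₀+1)).2.2.2 _ htκ ht0 ?_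
        have hset : (Ds (n₀+1)).1 ∩ Iio (sfun (n₀+1)) = (Ds (n₀+1)).1 ∩ Iio η := by
          ext x
          constructor
          · rintro ⟨h1, h2⟩
            exact ⟨h1, lt_of_lt_of_le h2 htη⟩
          · rintro ⟨h1, h2⟩
            refine ⟨h1, lt_of_le_of_ne
              (le_csSup (Statement17Aux.bdd_of_subset_Iio inter_subset_right) ⟨h1, h2⟩) ?_⟩
            intro hx
            rw [hx] at h1
            exact hcase h1
        rw [hset]
    have htE : sfun (n₀+1) ∈ E (Ds n₀).1 (Ds n₀).2 := (hsub n₀ htmem).2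
    refine ⟨n₀, hβδ, ?_⟩
    rw [hkey β hβ n₀]
    rw [← hηdef]
    show sfun n₀ ∈ _
    rw [← heq]
    exact htE
  have hω : Ordinal.omega0 < (Ordinal.cof δ).ord := by
    rw [← Cardinal.ord_aleph0]
    exact Cardinal.ord_lt_ord.mpr hδcof
  set f : O → Set O := fun i => ⋃ (n : ℕ) (_ : (n : O) = i),
    {β | β < δ ∧ sInf (PhiD (Ds n).1 (C δ) ∩ Ioi β) ∈ E (Ds n).1 (Ds n).2} with hfdef
  have hfJ : ∀ i < Ordinal.omega0, f i ∈ J δ := by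
    intro i hi
    obtain ⟨n, rfl⟩ := Ordinal.lt_omega0.mp hi
    have hfn : f n = {β | β < δ ∧ sInf (PhiD (Ds n).1 (C δ) ∩ Ioi β) ∈ E (Ds n).1 (Ds n).2} := by
      rw [hfdef]
      ext β
      simp only [mem_iUnion, mem_setOf_eq]
      constructor
      · rintro ⟨m, hm, h⟩
        obtain rfl : m = n := Nat.cast_inj.mp hm
        exact h
      · intro h
        exact ⟨n, rfl, h⟩
    rw [hfn]
    exact hE2 (Ds n).1 (Ds n).2 δ hδS
  have hunion := hJδ.2.2.2 Ordinal.omega0 hω f hfJ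
  apply hB
  refine hJδ.1 B _ ?_ hunion
  intro β hβ
  obtain ⟨n, h1, h2⟩ := hmain β hβ
  refine mem_biUnion (Ordinal.nat_lt_omega0 n) ?_
  rw [hfdef]
  exact mem_iUnion.mpr ⟨n, mem_iUnion.mpr ⟨rfl, ⟨h1, h2⟩⟩⟩
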